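/- Let N_1, N_2 be independent standard Gaussian random variables and F = N_1·N_2. Then for every polynomial f, E[F f(F) − f'(F) − F f''(F)] = 0; equivalently E[(Rf)(F)] = 0. In particular E[P_n(F)] = 0 for all n ≥ 1. -/

import Mathlib

open Polynomial MeasureTheory ProbabilityTheory Real Filter Set Topology
open scoped ENNReal NNReal

noncomputable def phi (x : ℝ) : ℝ := gaussianPDFReal 0 1 x

lemma phi_eq (x : ℝ) : phi x = (Real.sqrt (2 * π))⁻¹ * Real.exp (-(2⁻¹ * x ^ 2)) := by
  simp only [phi, gaussianPDFReal]
  norm_num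
  left; ring_nf

lemma phi_nonneg (x : ℝ) : 0 ≤ phi x := gaussianPDFReal_nonneg 0 1 x

lemma phi_funext : phi = fun x => (Real.sqrt (2 * π))⁻¹ * Real.exp (-(2⁻¹ * x ^ 2)) :=
  funext phi_eq

lemma continuous_phi : Continuous phi := by
  rw [phi_funext]; fun_prop

lemma hasDerivAt_phi (x : ℝ) : HasDerivAt phi (-x * phi x) x := by
  have h : HasDerivAt (fun y : ℝ => (Real.sqrt (2 * π))⁻¹ * Real.exp (-(2⁻¹ * y ^ 2)))
      ((Real.sqrt (2 * π))⁻¹ * (Real.exp (-(2⁻¹ * x ^ 2)) * -(2⁻¹ * (↑2 * x ^ (2-1))))) x :=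
    (((hasDerivAt_pow 2 x).const_mul (2⁻¹ : ℝ)).neg.exp).const_mul _
  rw [← phi_funext] at h
  convert h using 1
  rw [phi_eq]; push_cast; ring

lemma abs_pow_mul_phi_le (n : ℕ) (x : ℝ) :
    ‖x ^ n * phi x‖ ≤ (Real.sqrt (2 * π))⁻¹ * ((n.factorial : ℝ) * Real.exp 1) *
      Real.exp (-(4⁻¹ * x ^ 2)) := by
  have h1 : |x| ^ n ≤ (n.factorial : ℝ) * Real.exp |x| := by
    have h := Real.pow_div_factorial_le_exp (x := |x|) (abs_nonneg x) n
    rw [div_le_iff₀ (by positivity)] at h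
    linarith [h]
  have h2 : Real.exp |x| * Real.exp (-(2⁻¹ * x ^ 2))
      ≤ Real.exp 1 * Real.exp (-(4⁻¹ * x ^ 2)) := by
    rw [← Real.exp_add, ← Real.exp_add]
    apply Real.exp_le_exp.2
    nlinarith [sq_nonneg (|x| - 2), sq_abs x]
  have hc : (0:ℝ) ≤ (Real.sqrt (2 * π))⁻¹ := by positivity
  calc ‖x ^ n * phi x‖ = |x| ^ n * ((Real.sqrt (2 * π))⁻¹ * Real.exp (-(2⁻¹ * x ^ 2))) := by
        rw [phi_eq, norm_mul, Real.norm_eq_abs, Real.norm_eq_abs, abs_pow]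
        congr 1
        rw [abs_mul, abs_of_nonneg hc, abs_of_nonneg (Real.exp_pos _).le]
    _ ≤ ((n.factorial : ℝ) * Real.exp |x|) * ((Real.sqrt (2 * π))⁻¹ * Real.exp (-(2⁻¹ * x ^ 2))) := by
        apply mul_le_mul_of_nonneg_right h1 (by positivity)
    _ ≤ (Real.sqrt (2 * π))⁻¹ * ((n.factorial : ℝ) * Real.exp 1) * Real.exp (-(4⁻¹ * x ^ 2)) := by
        have := mul_le_mul_of_nonneg_left h2 (mul_nonneg (by positivity : (0:ℝ) ≤ (n.factorial : ℝ)) hc)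
        calc ((n.factorial : ℝ) * Real.exp |x|) * ((Real.sqrt (2 * π))⁻¹ * Real.exp (-(2⁻¹ * x ^ 2)))
            = ((n.factorial : ℝ) * (Real.sqrt (2 * π))⁻¹) * (Real.exp |x| * Real.exp (-(2⁻¹ * x ^ 2))) := by ring
          _ ≤ ((n.factorial : ℝ) * (Real.sqrt (2 * π))⁻¹) * (Real.exp 1 * Real.exp (-(4⁻¹ * x ^ 2))) := this
          _ = (Real.sqrt (2 * π))⁻¹ * ((n.factorial : ℝ) * Real.exp 1) * Real.exp (-(4⁻¹ * x ^ 2)) := by ring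

lemma integrable_pow_mul_phi (n : ℕ) : Integrable (fun x : ℝ => x ^ n * phi x) := by
  refine Integrable.mono' (((integrable_exp_neg_mul_sq (by norm_num : (0:ℝ) < 4⁻¹)).const_mul
    ((Real.sqrt (2 * π))⁻¹ * ((n.factorial : ℝ) * Real.exp 1)))) ?_ ?_
  · exact ((continuous_pow n).mul continuous_phi).aestronglyMeasurable
  · filter_upwards with x
    have := abs_pow_mul_phi_le n x
    simpa [neg_mul] using this

lemma tendsto_pow_mul_phi (n : ℕ) (l : Filter ℝ) (hl : Tendsto (fun x : ℝ => x ^ 2) l atTop) :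
    Tendsto (fun x : ℝ => x ^ n * phi x) l (𝓝 0) := by
  apply squeeze_zero_norm (abs_pow_mul_phi_le n)
  rw [show (0:ℝ) = (Real.sqrt (2 * π))⁻¹ * ((n.factorial : ℝ) * Real.exp 1) * 0 by ring]
  apply Tendsto.const_mul
  apply Real.tendsto_exp_atBot.comp
  exact tendsto_neg_atTop_atBot.comp (hl.const_mul_atTop (by norm_num))

noncomputable def momVol (k : ℕ) : ℝ := ∫ x : ℝ, x ^ k * phi x

set_option maxHeartbeats 1000000 in
lemma momVol_rec (k : ℕ) : momVol (k + 1) = k * momVol (k - 1) := by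
  set F : ℝ → ℝ := fun x => -(x ^ k * phi x) with hF
  set f' : ℝ → ℝ := fun x => x ^ (k + 1) * phi x - (k : ℝ) * (x ^ (k - 1) * phi x) with hf'
  have hderiv : ∀ x : ℝ, HasDerivAt F (f' x) x := by
    intro x
    have h : HasDerivAt (fun y : ℝ => -(y ^ k * phi y))
        (-(↑k * x ^ (k - 1) * phi x + x ^ k * (-x * phi x))) x :=
      ((hasDerivAt_pow k x).mul (hasDerivAt_phi x)).neg
    convert h using 1
    simp only [hf', pow_succ]
    ring
  have hint : Integrable f' :=
    (integrable_pow_mul_phi (k + 1)).sub ((integrable_pow_mul_phi (k - 1)).const_mul (k : ℝ))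
  have htop : Tendsto F atTop (𝓝 0) := by
    have := (tendsto_pow_mul_phi k atTop (tendsto_pow_atTop two_ne_zero)).neg
    simpa using this
  have hbot : Tendsto F atBot (𝓝 0) := by
    have hsq : Tendsto (fun x : ℝ => x ^ 2) atBot atTop := by
      have := (tendsto_pow_atTop (two_ne_zero)).comp (tendsto_neg_atBot_atTop (G := ℝ))
      simpa [Function.comp_def, neg_pow] using this
    have := (tendsto_pow_mul_phi k atBot hsq).neg
    simpa using this
  have h1 : ∫ x in Ioi (0:ℝ), f' x = 0 - F 0 :=
    integral_Ioi_of_hasDerivAt_of_tendsto' (fun x _ => hderiv x) hint.integrableOn htop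
  have h2 : ∫ x in Iic (0:ℝ), f' x = F 0 - 0 :=
    integral_Iic_of_hasDerivAt_of_tendsto' (fun x _ => hderiv x) hint.integrableOn hbot
  have h3 : ∫ x : ℝ, f' x = 0 := by
    rw [← intervalIntegral.integral_Iic_add_Ioi hint.integrableOn hint.integrableOn, h1, h2]; ring
  have h4 : ∫ x : ℝ, f' x = momVol (k + 1) - (k : ℝ) * momVol (k - 1) := by
    rw [hf']
    rw [integral_sub (integrable_pow_mul_phi (k + 1))
      ((integrable_pow_mul_phi (k - 1)).const_mul (k : ℝ)), integral_const_mul]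
    rfl
  have := h4.symm.trans h3
  unfold momVol
  unfold momVol at this
  linarith

lemma measurable_phi_toNNReal : Measurable (fun x => (phi x).toNNReal) :=
  continuous_phi.measurable.real_toNNReal

lemma gaussianReal_eq_withDensity :
    gaussianReal 0 1 = (volume : Measure ℝ).withDensity (fun x => ((phi x).toNNReal : ℝ≥0∞)) := by
  rw [gaussianReal_of_var_ne_zero 0 one_ne_zero]
  congr 1

lemma integral_gaussianReal_eq (g : ℝ → ℝ) :
    ∫ x, g x ∂(gaussianReal 0 1) = ∫ x, g x * phi x := by
  rw [gaussianReal_eq_withDensity, integral_withDensity_eq_integral_smul measurable_phi_toNNReal]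
  congr 1
  ext x
  rw [NNReal.smul_def, smul_eq_mul, Real.coe_toNNReal _ (phi_nonneg x), mul_comm]

lemma integrable_pow_gaussianReal (n : ℕ) :
    Integrable (fun x : ℝ => x ^ n) (gaussianReal 0 1) := by
  rw [gaussianReal_eq_withDensity,
    integrable_withDensity_iff_integrable_smul measurable_phi_toNNReal]
  have := integrable_pow_mul_phi n
  apply this.congr
  filter_upwards with x
  rw [NNReal.smul_def, smul_eq_mul, Real.coe_toNNReal _ (phi_nonneg x), mul_comm]

lemma moment_gauss (n : ℕ) : ∫ x, x ^ n ∂(gaussianReal 0 1) = momVol n := by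
  rw [integral_gaussianReal_eq]; rfl

lemma moment_gauss_rec (k : ℕ) :
    ∫ x, x ^ (k + 1) ∂(gaussianReal 0 1) = k * ∫ x, x ^ (k - 1) ∂(gaussianReal 0 1) := by
  rw [moment_gauss, moment_gauss, momVol_rec]

/-- The Sheffer-type polynomials `P n = R^n 1` where `(Rf)(x) = x f(x) - f'(x) - x f''(x)`. -/
noncomputable def shefferP : ℕ → Polynomial ℝ
  | 0 => 1
  | n + 1 =>
      X * shefferP n - derivative (shefferP n) - X * derivative (derivative (shefferP n))

/-- The joint law of two independent standard Gaussians. -/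
noncomputable def gauss2 : Measure (ℝ × ℝ) :=
  (gaussianReal 0 1).prod (gaussianReal 0 1)

noncomputable def prodMom (n : ℕ) : ℝ := (momVol n) ^ 2

lemma integrable_mulpow_gauss2 (n : ℕ) :
    Integrable (fun p : ℝ × ℝ => (p.1 * p.2) ^ n) gauss2 := by
  have := (integrable_pow_gaussianReal n).mul_prod (integrable_pow_gaussianReal n)
  apply this.congr
  filter_upwards with p
  rw [mul_pow]

lemma integral_mulpow_gauss2 (n : ℕ) :
    ∫ p : ℝ × ℝ, (p.1 * p.2) ^ n ∂gauss2 = prodMom n := by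
  have : (fun p : ℝ × ℝ => (p.1 * p.2) ^ n) = fun p : ℝ × ℝ => p.1 ^ n * p.2 ^ n := by
    ext p; rw [mul_pow]
  rw [gauss2, this, integral_prod_mul (fun x : ℝ => x ^ n) (fun x : ℝ => x ^ n),
    moment_gauss, prodMom, sq]

lemma prodMom_one : prodMom 1 = 0 := by
  have h := momVol_rec 0
  simp only [Nat.cast_zero, zero_mul, zero_add] at h
  rw [prodMom, h]
  norm_num

lemma prodMom_rec (k : ℕ) : prodMom (k + 1) = (k : ℝ) ^ 2 * prodMom (k - 1) := by
  rw [prodMom, prodMom, momVol_rec]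
  ring

noncomputable def Rop (f : Polynomial ℝ) : Polynomial ℝ :=
  X * f - derivative f - X * derivative (derivative f)

lemma eval_Rop (f : Polynomial ℝ) (z : ℝ) :
    (Rop f).eval z = z * f.eval z - (derivative f).eval z
      - z * (derivative (derivative f)).eval z := by
  simp [Rop]

lemma integrable_eval_gauss2 (g : Polynomial ℝ) :
    Integrable (fun p : ℝ × ℝ => g.eval (p.1 * p.2)) gauss2 := by
  have h : (fun p : ℝ × ℝ => g.eval (p.1 * p.2)) =
      fun p : ℝ × ℝ => ∑ i ∈ Finset.range (g.natDegree + 1), g.coeff i * (p.1 * p.2) ^ i := by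
    funext p
    exact g.eval_eq_sum_range _
  rw [h]
  exact integrable_finset_sum _ fun i _ => (integrable_mulpow_gauss2 i).const_mul _

lemma key (f : Polynomial ℝ) : ∫ p : ℝ × ℝ, (Rop f).eval (p.1 * p.2) ∂gauss2 = 0 := by
  induction f using Polynomial.induction_on' with
  | add p q hp hq =>
    have hT : Rop (p + q) = Rop p + Rop q := by
      simp only [Rop, derivative_add]
      ring
    have h : (fun z : ℝ × ℝ => (Rop (p + q)).eval (z.1 * z.2)) =
        fun z : ℝ × ℝ => (Rop p).eval (z.1 * z.2) + (Rop q).eval (z.1 * z.2) := by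
      funext z; rw [hT, eval_add]
    rw [h, integral_add (integrable_eval_gauss2 _) (integrable_eval_gauss2 _), hp, hq, add_zero]
  | monomial n a =>
    have hpt : ∀ z : ℝ, (Rop (monomial n a)).eval z =
        a * z ^ (n + 1) - (a * (n : ℝ)) * z ^ (n - 1)
          - (a * (n : ℝ) * ((n - 1 : ℕ) : ℝ)) * z ^ (n - 1 - 1 + 1) := by
      intro z
      simp only [Rop, eval_sub, eval_mul, eval_X, derivative_monomial, eval_monomial]
      ring
    have h : (fun p : ℝ × ℝ => (Rop (monomial n a)).eval (p.1 * p.2)) =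
        fun p : ℝ × ℝ => a * (p.1 * p.2) ^ (n + 1) - (a * (n : ℝ)) * (p.1 * p.2) ^ (n - 1)
          - (a * (n : ℝ) * ((n - 1 : ℕ) : ℝ)) * (p.1 * p.2) ^ (n - 1 - 1 + 1) := by
      funext p; exact hpt _
    have h1 : Integrable (fun p : ℝ × ℝ => a * (p.1 * p.2) ^ (n + 1)) gauss2 :=
      (integrable_mulpow_gauss2 (n+1)).const_mul a
    have h2 : Integrable (fun p : ℝ × ℝ => (a * (n : ℝ)) * (p.1 * p.2) ^ (n - 1)) gauss2 :=
      (integrable_mulpow_gauss2 (n-1)).const_mul _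
    have h3 : Integrable (fun p : ℝ × ℝ =>
        (a * (n : ℝ) * ((n - 1 : ℕ) : ℝ)) * (p.1 * p.2) ^ (n - 1 - 1 + 1)) gauss2 :=
      (integrable_mulpow_gauss2 (n-1-1+1)).const_mul _
    have h12 : Integrable (fun p : ℝ × ℝ => a * (p.1 * p.2) ^ (n + 1)
        - (a * (n : ℝ)) * (p.1 * p.2) ^ (n - 1)) gauss2 := h1.sub h2
    rw [h, integral_sub h12 h3, integral_sub h1 h2,
      integral_const_mul, integral_const_mul, integral_const_mul,
      integral_mulpow_gauss2, integral_mulpow_gauss2, integral_mulpow_gauss2]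
    rcases n with _ | _ | k
    · simp [prodMom_one]
    · have h2 : prodMom 2 = prodMom 0 := by
        have := prodMom_rec 1
        norm_num at this
        simpa using this
      norm_num [h2]
    · have h3 : prodMom (k + 2 + 1) = ((k + 2 : ℕ) : ℝ) ^ 2 * prodMom (k + 1) := by
        simpa using prodMom_rec (k + 2)
      simp only [Nat.add_sub_cancel, show k + 2 - 1 = k + 1 from rfl,
        show k + 2 - 1 - 1 + 1 = k + 1 from rfl, h3]
      push_cast
      ring


/-- Stein identity for the normal product F = N₁N₂: E[(Rf)(F)] = 0 for every polynomial f;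
in particular E[Pₙ(F)] = 0 for n ≥ 1. -/
theorem stein_identity_normal_product :
    (∀ f : Polynomial ℝ,
      ∫ p : ℝ × ℝ,
        (p.1 * p.2 * f.eval (p.1 * p.2) - (derivative f).eval (p.1 * p.2)
          - p.1 * p.2 * (derivative (derivative f)).eval (p.1 * p.2)) ∂gauss2 = 0) ∧
    ∀ n : ℕ, 1 ≤ n → ∫ p : ℝ × ℝ, (shefferP n).eval (p.1 * p.2) ∂gauss2 = 0 := by
  constructor
  · intro f
    have h : (fun p : ℝ × ℝ => p.1 * p.2 * f.eval (p.1 * p.2)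
        - (derivative f).eval (p.1 * p.2)
        - p.1 * p.2 * (derivative (derivative f)).eval (p.1 * p.2)) =
        fun p : ℝ × ℝ => (Rop f).eval (p.1 * p.2) :=
      funext fun p => (eval_Rop f _).symm
    rw [h]
    exact key f
  · intro n hn
    cases n with
    | zero => omega
    | succ m =>
      have h : shefferP (m + 1) = Rop (shefferP m) := by rw [shefferP]; rfl
      rw [h]
      exact key _
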